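/- Fix N ≥ 1 and ratings r : Fin N → ℝ. For every real a with min_i r_i < a < max_i r_i, there exists β ∈ ℝ such that the softmax(β) distribution q(β)_i = exp(β r_i)/Σ_j exp(β r_j) satisfies Σ_i q(β)_i r_i = a; that is, the temperature parameter can be chosen so that the engagement (feasibility) constraint holds with equality. -/

import Mathlib

/-- The softmax(β) recommendation distribution for ratings `r`. -/
noncomputable def softmax (N : ℕ) (r : Fin N → ℝ) (β : ℝ) : Fin N → ℝ :=
  fun i => Real.exp (β * r i) / ∑ j, Real.exp (β * r j)

/-- **For any target engagement level strictly between the minimal and maximal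
rating, some softmax temperature attains it exactly.** -/
theorem softmax_attains_engagement
    (N : ℕ) (hN : 1 ≤ N) (r : Fin N → ℝ) (a : ℝ)
    (hlow : Finset.univ.inf'
      (Finset.univ_nonempty_iff.mpr (Fin.pos_iff_nonempty.mp hN)) r < a)
    (hhigh : a < Finset.univ.sup'
      (Finset.univ_nonempty_iff.mpr (Fin.pos_iff_nonempty.mp hN)) r) :
    ∃ β : ℝ, ∑ i, softmax N r β i * r i = a := by
  have ne : (Finset.univ : Finset (Fin N)).Nonempty :=
    Finset.univ_nonempty_iff.mpr (Fin.pos_iff_nonempty.mp hN)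
  set m := Finset.univ.inf' ne r with hm
  set M := Finset.univ.sup' ne r with hMdef
  set S : ℝ → ℝ := fun β => ∑ j, Real.exp (β * r j) with hSdef
  have hS : ∀ β, 0 < S β := fun β => Finset.sum_pos (fun j _ => Real.exp_pos _) ne
  set f : ℝ → ℝ := fun β => (∑ i, Real.exp (β * r i) * r i) / S β with hfdef
  have hsm : ∀ β, ∑ i, softmax N r β i * r i = f β := by
    intro β
    simp only [softmax, hfdef, hSdef, Finset.sum_div, div_mul_eq_mul_div]
  have hcont : Continuous f := by
    apply Continuous.div
    · exact continuous_finset_sum _ fun i _ =>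
        (Real.continuous_exp.comp (continuous_id.mul continuous_const)).mul continuous_const
    · exact continuous_finset_sum _ fun i _ =>
        Real.continuous_exp.comp (continuous_id.mul continuous_const)
    · exact fun β => (hS β).ne'
  have hrM : ∀ i, r i ≤ M := fun i => Finset.le_sup' r (Finset.mem_univ i)
  have hmr : ∀ i, m ≤ r i := fun i => Finset.inf'_le r (Finset.mem_univ i)
  have hexpM : ∀ β, Real.exp (β * M) ≤ S β := by
    obtain ⟨iM, -, hiM⟩ := Finset.exists_mem_eq_sup' ne r
    intro β
    calc Real.exp (β * M) = Real.exp (β * r iM) := by rw [← hiM]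
      _ ≤ S β := Finset.single_le_sum (f := fun j => Real.exp (β * r j))
        (fun j _ => (Real.exp_pos _).le) (Finset.mem_univ iM)
  have hexpm : ∀ β, Real.exp (β * m) ≤ S β := by
    obtain ⟨im, -, him⟩ := Finset.exists_mem_eq_inf' ne r
    intro β
    calc Real.exp (β * m) = Real.exp (β * r im) := by rw [← him]
      _ ≤ S β := Finset.single_le_sum (f := fun j => Real.exp (β * r j))
        (fun j _ => (Real.exp_pos _).le) (Finset.mem_univ im)
  -- upper bound: M - f β ≤ g β
  have keyM : ∀ β, M - f β ≤ ∑ i, (M - r i) * Real.exp (β * (r i - M)) := by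
    intro β
    have h1 : M - f β = (∑ i, Real.exp (β * r i) * (M - r i)) / S β := by
      rw [hfdef, eq_div_iff (hS β).ne', sub_mul, div_mul_cancel₀ _ (hS β).ne']
      simp only [hSdef, Finset.mul_sum, ← Finset.sum_sub_distrib, mul_comm]
      exact Finset.sum_congr rfl fun i _ => by ring
    have hnum : 0 ≤ ∑ i, Real.exp (β * r i) * (M - r i) :=
      Finset.sum_nonneg fun i _ =>
        mul_nonneg (Real.exp_pos _).le (sub_nonneg.mpr (hrM i))
    have h2 : (∑ i, Real.exp (β * r i) * (M - r i)) / S β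
        ≤ (∑ i, Real.exp (β * r i) * (M - r i)) / Real.exp (β * M) :=
      div_le_div_of_nonneg_left hnum (Real.exp_pos _) (hexpM β)
    have h3 : (∑ i, Real.exp (β * r i) * (M - r i)) / Real.exp (β * M)
        = ∑ i, (M - r i) * Real.exp (β * (r i - M)) := by
      rw [Finset.sum_div]
      refine Finset.sum_congr rfl fun i _ => ?_
      rw [mul_comm, mul_div_assoc, ← Real.exp_sub, ← mul_sub]
    rw [h1, ← h3]; exact h2
  -- lower bound: f β - m ≤ g' β
  have keym : ∀ β, f β - m ≤ ∑ i, (r i - m) * Real.exp (β * (r i - m)) := by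
    intro β
    have h1 : f β - m = (∑ i, Real.exp (β * r i) * (r i - m)) / S β := by
      rw [hfdef, eq_div_iff (hS β).ne', sub_mul, div_mul_cancel₀ _ (hS β).ne']
      simp only [hSdef, Finset.mul_sum, ← Finset.sum_sub_distrib, mul_comm]
      exact Finset.sum_congr rfl fun i _ => by ring
    have hnum : 0 ≤ ∑ i, Real.exp (β * r i) * (r i - m) :=
      Finset.sum_nonneg fun i _ =>
        mul_nonneg (Real.exp_pos _).le (sub_nonneg.mpr (hmr i))
    have h2 : (∑ i, Real.exp (β * r i) * (r i - m)) / S β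
        ≤ (∑ i, Real.exp (β * r i) * (r i - m)) / Real.exp (β * m) :=
      div_le_div_of_nonneg_left hnum (Real.exp_pos _) (hexpm β)
    have h3 : (∑ i, Real.exp (β * r i) * (r i - m)) / Real.exp (β * m)
        = ∑ i, (r i - m) * Real.exp (β * (r i - m)) := by
      rw [Finset.sum_div]
      refine Finset.sum_congr rfl fun i _ => ?_
      rw [mul_comm, mul_div_assoc, ← Real.exp_sub, ← mul_sub]
    rw [h1, ← h3]; exact h2
  -- limits
  have hgM : Filter.Tendsto (fun β => ∑ i, (M - r i) * Real.exp (β * (r i - M)))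
      Filter.atTop (nhds 0) := by
    have h0 : (0 : ℝ) = ∑ _i : Fin N, (0 : ℝ) := by simp
    rw [h0]
    refine tendsto_finset_sum _ fun i _ => ?_
    rcases eq_or_lt_of_le (hrM i) with h | h
    · exact h ▸ by simpa using (tendsto_const_nhds : Filter.Tendsto (fun _ : ℝ => (0:ℝ)) _ _)
    · have hc : r i - M < 0 := sub_neg.mpr h
      have hb : Filter.Tendsto (fun β : ℝ => β * (r i - M)) Filter.atTop Filter.atBot :=
        (Filter.tendsto_mul_const_atBot_of_neg hc).mpr Filter.tendsto_id
      simpa using (Real.tendsto_exp_atBot.comp hb).const_mul (M - r i)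
  have hgm : Filter.Tendsto (fun β => ∑ i, (r i - m) * Real.exp (β * (r i - m)))
      Filter.atBot (nhds 0) := by
    have h0 : (0 : ℝ) = ∑ _i : Fin N, (0 : ℝ) := by simp
    rw [h0]
    refine tendsto_finset_sum _ fun i _ => ?_
    rcases eq_or_lt_of_le (hmr i) with h | h
    · exact h ▸ by simpa using (tendsto_const_nhds : Filter.Tendsto (fun _ : ℝ => (0:ℝ)) _ _)
    · have hc : 0 < r i - m := sub_pos.mpr h
      have hb : Filter.Tendsto (fun β : ℝ => β * (r i - m)) Filter.atBot Filter.atBot :=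
        (Filter.tendsto_mul_const_atBot_of_pos hc).mpr Filter.tendsto_id
      simpa using (Real.tendsto_exp_atBot.comp hb).const_mul (r i - m)
  obtain ⟨B₂, hB₂⟩ := Filter.eventually_atTop.mp (hgM.eventually_lt_const (sub_pos.mpr hhigh))
  obtain ⟨B₁, hB₁⟩ := Filter.eventually_atBot.mp (hgm.eventually_lt_const (sub_pos.mpr hlow))
  have hf₁ : f (min B₁ B₂) < a := by
    have := keym (min B₁ B₂)
    have h := hB₁ (min B₁ B₂) (min_le_left _ _)
    linarith
  have hf₂ : a < f (max B₁ B₂) := by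
    have := keyM (max B₁ B₂)
    have h := hB₂ (max B₁ B₂) (le_max_right _ _)
    linarith
  obtain ⟨β, -, hβ⟩ := intermediate_value_Icc (min_le_max) hcont.continuousOn
    ⟨hf₁.le, hf₂.le⟩
  exact ⟨β, (hsm β).trans hβ⟩
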